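/- Let φ : ℕ → ℝ≥0 be nondecreasing and concave (φ(i+2) - φ(i+1) ≤ φ(i+1) - φ(i) for all i), with φ(0) = 0 and φ(1) = 1. Then for any p ∈ [0,1], the Bernoulli distribution Ber(p) is dominated in the convex order by the Poisson distribution Poi(p); that is, for every convex function f : ℕ → ℝ (extended appropriately), E[f(Ber(p))] ≤ E[f(Poi(p))]. -/

import Mathlib

/-- Ber(p) is dominated by Poi(p) in the convex order: for every (discretely)
convex function `f : ℕ → ℝ` whose Poisson expectation exists,
`E[f(Ber(p))] ≤ E[f(Poi(p))]`. -/
theorem stmt0 (φ : ℕ → ℝ) (hφ0 : φ 0 = 0) (hφ1 : φ 1 = 1)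
    (hφnn : ∀ k, 0 ≤ φ k) (hφmono : Monotone φ)
    (hφconc : ∀ k, φ (k + 2) - φ (k + 1) ≤ φ (k + 1) - φ k)
    (p : ℝ) (hp0 : 0 ≤ p) (hp1 : p ≤ 1)
    (f : ℕ → ℝ)
    (hconv : ∀ k, f (k + 1) - f k ≤ f (k + 2) - f (k + 1))
    (hsum : Summable fun k : ℕ => Real.exp (-p) * p ^ k / (Nat.factorial k) * f k) :
    (1 - p) * f 0 + p * f 1 ≤
      ∑' k : ℕ, Real.exp (-p) * p ^ k / (Nat.factorial k) * f k := by
  set w : ℕ → ℝ := fun k => Real.exp (-p) * p ^ k / (Nat.factorial k) with hw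
  have hwnn : ∀ k, 0 ≤ w k := fun k =>
    div_nonneg (mul_nonneg (Real.exp_pos _).le (pow_nonneg hp0 k)) (Nat.cast_nonneg _)
  have hexp : ∀ x : ℝ, Real.exp x = ∑' n : ℕ, x ^ n / (Nat.factorial n) := by
    intro x
    rw [Real.exp_eq_exp_ℝ, NormedSpace.exp_eq_tsum_div]
  -- summability of w
  have hsumw : Summable w := by
    have := (Real.summable_pow_div_factorial p).mul_left (Real.exp (-p))
    simpa [hw, mul_div_assoc] using this
  -- summability of k * w k
  have hsumkw : Summable (fun k : ℕ => (k : ℝ) * w k) := by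
    rw [← summable_nat_add_iff 1]
    have := (Real.summable_pow_div_factorial p).mul_left (Real.exp (-p) * p)
    apply this.congr
    intro n
    have : (Nat.factorial (n + 1) : ℝ) = (n + 1) * Nat.factorial n := by
      push_cast [Nat.factorial_succ]; ring
    simp only [hw]
    field_simp [hw, this, pow_succ]
    rw [Nat.factorial_succ]; push_cast; ring
  -- total mass 1
  have htot : ∑' k, w k = 1 := by
    have : ∑' k, w k = Real.exp (-p) * ∑' k : ℕ, p ^ k / (Nat.factorial k) := by
      rw [← tsum_mul_left]; congr 1 with k; rw [hw]; ring
    rw [this, ← hexp, ← Real.exp_add]; simp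
  -- mean p
  have hmean : ∑' k : ℕ, (k : ℝ) * w k = p := by
    rw [Summable.tsum_eq_zero_add hsumkw]
    have h1 : (fun n : ℕ => ((n + 1 : ℕ) : ℝ) * w (n + 1))
        = fun n : ℕ => (Real.exp (-p) * p) * (p ^ n / (Nat.factorial n)) := by
      funext n
      have hfac : (Nat.factorial (n + 1) : ℝ) = (n + 1) * Nat.factorial n := by
        push_cast [Nat.factorial_succ]; ring
      have hfn : (0:ℝ) < Nat.factorial n := by positivity
      rw [hw]
      field_simp [hfac, pow_succ]
      rw [Nat.factorial_succ]; push_cast; ring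
    rw [h1, tsum_mul_left, ← hexp]
    have h2 : Real.exp (-p) * Real.exp p = 1 := by rw [← Real.exp_add]; simp
    push_cast
    linear_combination p * h2
  -- increments bound: f 1 - f 0 ≤ f (k+1) - f k
  have hincr : ∀ k, f 1 - f 0 ≤ f (k + 1) - f k := by
    intro k
    induction k with
    | zero => simp
    | succ n ih => exact ih.trans (hconv n)
  -- linear lower bound: f 0 + (f 1 - f 0) * k ≤ f k
  have hlin : ∀ k : ℕ, f 0 + (f 1 - f 0) * k ≤ f k := by
    intro k
    induction k with
    | zero => simp
    | succ n ih =>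
      have := hincr n
      push_cast
      nlinarith [ih]
  -- summability of the linear lower bound weighted
  have hsumlin : Summable (fun k : ℕ => w k * (f 0 + (f 1 - f 0) * k)) := by
    have h3 := (hsumw.mul_right (f 0)).add (hsumkw.mul_left (f 1 - f 0))
    apply h3.congr
    intro k
    push_cast
    ring
  have key : ∑' k, w k * (f 0 + (f 1 - f 0) * k) ≤ ∑' k, w k * f k := by
    apply Summable.tsum_le_tsum _ hsumlin hsum
    intro k
    exact mul_le_mul_of_nonneg_left (hlin k) (hwnn k)
  have hval : ∑' k, w k * (f 0 + (f 1 - f 0) * k) = (1 - p) * f 0 + p * f 1 := by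
    have hsplit : (fun k : ℕ => w k * (f 0 + (f 1 - f 0) * k))
        = fun k : ℕ => w k * f 0 + (f 1 - f 0) * ((k : ℝ) * w k) := by
      funext k; ring
    rw [hsplit, Summable.tsum_add (hsumw.mul_right (f 0)) (hsumkw.mul_left (f 1 - f 0)),
      tsum_mul_right, tsum_mul_left, htot, hmean]
    ring
  calc (1 - p) * f 0 + p * f 1 = ∑' k, w k * (f 0 + (f 1 - f 0) * k) := hval.symm
    _ ≤ ∑' k, w k * f k := key
    _ = ∑' k : ℕ, Real.exp (-p) * p ^ k / (Nat.factorial k) * f k := by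
        congr 1
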